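/- arXiv:2303.06127 — 2 statements merged into one kernel-verified Lean document; each statement's English description precedes it below -/
import Mathlib

section
/- For every memoryless randomized algorithm given by an acceptance-probability function F, every k ≥ 1 and every p ∈ (0,1), there exists a finite list σ of intervals with at most k distinct lengths such that opt(σ) ≥ 2k and, under the distribution run_F(σ), the final solution has at most one element with probability at least p. (That is, no memoryless randomized algorithm achieves a competitive ratio better than 2k for unweighted interval selection with revocable decisions and k different lengths.) -/
open scoped Classical

/-- An interval: a pair `(s, f)` of reals with `s < f`, identified with `[s, f) ⊆ ℝ`. -/
structure Ivl where
  s : ℝ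
  f : ℝ
  lt : s < f

namespace Ivl

noncomputable instance : DecidableEq Ivl := fun a b =>
  decidable_of_iff (a.s = b.s ∧ a.f = b.f) (by cases a; cases b; simp)

/-- The set of points covered by an interval. -/
def toSet (I : Ivl) : Set ℝ := Set.Ico I.s I.f

/-- The length of an interval. -/
def length (I : Ivl) : ℝ := I.f - I.s

/-- Two intervals conflict if their point sets intersect. -/
def Conflict (I J : Ivl) : Prop := (I.toSet ∩ J.toSet).Nonempty

/-- A finite set of intervals is feasible (pairwise disjoint) if no two distinct members
conflict. -/
def Feasible (S : Finset Ivl) : Prop :=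
  ∀ I ∈ S, ∀ J ∈ S, I ≠ J → ¬ Conflict I J

end Ivl

/-- An online interval-selection algorithm with revocable acceptances: a function from finite
lists of intervals to finite sets of intervals such that the output consists of intervals
occurring in the input, is pairwise disjoint, and each new output is contained in the previous
output together with the newly arrived interval. -/
structure OnlineAlg where
  run : List Ivl → Finset Ivl
  mem_of_run : ∀ σ : List Ivl, ∀ I ∈ run σ, I ∈ σ
  feasible_run : ∀ σ : List Ivl, Ivl.Feasible (run σ)
  revocable : ∀ (σ : List Ivl) (I : Ivl), run (σ ++ [I]) ⊆ insert I (run σ)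

/-- `opt σ` is the maximum cardinality of a pairwise-disjoint finite set of intervals all of
which occur in `σ`. -/
noncomputable def opt (σ : List Ivl) : ℕ :=
  (σ.toFinset.powerset.filter (fun T => Ivl.Feasible T)).sup Finset.card

/-- The solution obtained from `S` by taking the new interval `I` and discarding all members
of `S` conflicting with it. -/
noncomputable def takeNew (S : Finset Ivl) (I : Ivl) : Finset Ivl :=
  insert I (S.filter (fun J => ¬ Ivl.Conflict J I))

/-- One step of a memoryless randomized algorithm with acceptance-probability function `F`:
given current solution `S` and arrival `I`, move to `takeNew S I` with probability `F I S`
and stay at `S` otherwise. -/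
noncomputable def memStepPMF (F : Ivl → Finset Ivl → ℝ)
    (hF : ∀ (I : Ivl) (S : Finset Ivl), F I S ∈ Set.Icc (0 : ℝ) 1)
    (I : Ivl) (S : Finset Ivl) : PMF (Finset Ivl) :=
  (PMF.bernoulli (Real.toNNReal (F I S))
      (Real.toNNReal_le_one.mpr (hF I S).2)).bind
    (fun b => PMF.pure (if b then takeNew S I else S))

/-- Run of a memoryless randomized algorithm from a given distribution over solutions. -/
noncomputable def memRunAux (F : Ivl → Finset Ivl → ℝ)
    (hF : ∀ (I : Ivl) (S : Finset Ivl), F I S ∈ Set.Icc (0 : ℝ) 1) :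
    PMF (Finset Ivl) → List Ivl → PMF (Finset Ivl)
  | μ, [] => μ
  | μ, I :: σ => memRunAux F hF (μ.bind (fun S => memStepPMF F hF I S)) σ

/-- `memRun F hF σ` is the distribution over final solutions of the memoryless randomized
algorithm with acceptance-probability function `F` run on the arrival sequence `σ`,
starting from the empty solution. -/
noncomputable def memRun (F : Ivl → Finset Ivl → ℝ)
    (hF : ∀ (I : Ivl) (S : Finset Ivl), F I S ∈ Set.Icc (0 : ℝ) 1)
    (σ : List Ivl) : PMF (Finset Ivl) :=
  memRunAux F hF (PMF.pure ∅) σ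

section Helpers

open Ivl

lemma Ivl.nonempty_toSet (I : Ivl) : I.toSet.Nonempty := ⟨I.s, le_refl _, I.lt⟩

lemma Ivl.conflict_self (I : Ivl) : I.Conflict I :=
  ⟨I.s, ⟨le_refl _, I.lt⟩, ⟨le_refl _, I.lt⟩⟩

lemma Ivl.conflict_comm {I J : Ivl} (h : I.Conflict J) : J.Conflict I := by
  obtain ⟨x, hx1, hx2⟩ := h; exact ⟨x, hx2, hx1⟩

lemma Ivl.not_conflict_of_disjoint {I J : Ivl} (h : I.toSet ∩ J.toSet = ∅) :
    ¬ I.Conflict J := by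
  intro hc; rw [Ivl.Conflict, h] at hc; exact Set.not_nonempty_empty hc

lemma Ivl.conflict_of_subset {I J : Ivl} (h : I.toSet ⊆ J.toSet) : I.Conflict J := by
  obtain ⟨x, hx⟩ := I.nonempty_toSet
  exact ⟨x, hx, h hx⟩

lemma takeNew_eq_singleton {s : Finset Ivl} {C : Ivl}
    (h : ∀ J ∈ s, Ivl.Conflict J C) : takeNew s C = {C} := by
  unfold takeNew
  have : s.filter (fun J => ¬ Ivl.Conflict J C) = ∅ := by
    apply Finset.filter_eq_empty_iff.mpr
    intro J hJ hc
    exact hc (h J hJ)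
  rw [this]; rfl

lemma takeNew_absorb (s : Finset Ivl) (C : Ivl) :
    takeNew (takeNew s C) C = takeNew s C := by
  unfold takeNew
  rw [Finset.filter_insert, if_neg (by simp [Ivl.conflict_self])]
  simp [Finset.filter_filter]

end Helpers

section Run

variable (F : Ivl → Finset Ivl → ℝ)
    (hF : ∀ (I : Ivl) (S : Finset Ivl), F I S ∈ Set.Icc (0 : ℝ) 1)

lemma memRunAux_append (μ : PMF (Finset Ivl)) (σ₁ σ₂ : List Ivl) :
    memRunAux F hF μ (σ₁ ++ σ₂) = memRunAux F hF (memRunAux F hF μ σ₁) σ₂ := by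
  induction σ₁ generalizing μ with
  | nil => rfl
  | cons I σ ih =>
    simp only [List.cons_append, memRunAux]
    exact ih _

lemma memRunAux_eq_bind (μ : PMF (Finset Ivl)) (σ : List Ivl) :
    memRunAux F hF μ σ = μ.bind (fun s => memRunAux F hF (PMF.pure s) σ) := by
  induction σ generalizing μ with
  | nil => simp only [memRunAux, PMF.bind_pure]
  | cons I σ ih =>
    simp only [memRunAux]
    rw [ih, PMF.bind_bind]
    congr 1
    funext s
    rw [PMF.pure_bind]
    exact (ih _).symm

/-- Probability of ending at `s'` starting from `s` on input `σ`. -/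
noncomputable def Pr (σ : List Ivl) (s s' : Finset Ivl) : ENNReal :=
  memRunAux F hF (PMF.pure s) σ s'

lemma Pr_nil (s : Finset Ivl) : Pr F hF [] s s = 1 := by
  simp [Pr, memRunAux, PMF.pure_apply]

lemma Pr_chain (σ₁ σ₂ : List Ivl) (s₀ s₁ s₂ : Finset Ivl) :
    Pr F hF σ₁ s₀ s₁ * Pr F hF σ₂ s₁ s₂ ≤ Pr F hF (σ₁ ++ σ₂) s₀ s₂ := by
  unfold Pr
  rw [memRunAux_append, memRunAux_eq_bind F hF (memRunAux F hF (PMF.pure s₀) σ₁)]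
  rw [PMF.bind_apply]
  exact ENNReal.le_tsum s₁

end Run

section Block

variable (F : Ivl → Finset Ivl → ℝ)
    (hF : ∀ (I : Ivl) (S : Finset Ivl), F I S ∈ Set.Icc (0 : ℝ) 1)

lemma memStep_apply (C : Ivl) (s t : Finset Ivl) :
    memStepPMF F hF C s t = ENNReal.ofReal (F C s) * (if t = takeNew s C then 1 else 0)
      + (1 - ENNReal.ofReal (F C s)) * (if t = s then 1 else 0) := by
  unfold memStepPMF
  rw [PMF.bind_apply, tsum_bool]
  simp only [PMF.bernoulli_apply, Bool.cond_false, Bool.cond_true, PMF.pure_apply]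
  simp only [if_true, Bool.false_eq_true, if_false]
  rw [ENNReal.coe_sub, ENNReal.coe_one,
    show ((F C s).toNNReal : ENNReal) = ENNReal.ofReal (F C s) from rfl]
  ring

lemma memStep_eq_pure_of_zero {C : Ivl} {s : Finset Ivl} (h : F C s = 0) :
    memStepPMF F hF C s = PMF.pure s := by
  ext t
  rw [memStep_apply, h, PMF.pure_apply]
  simp

lemma memStep_eq_pure_of_fixed {C : Ivl} {s : Finset Ivl} (h : takeNew s C = s) :
    memStepPMF F hF C s = PMF.pure s := by
  unfold memStepPMF
  have : (fun b : Bool => PMF.pure (if b then takeNew s C else s))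
      = fun _ => PMF.pure s := by
    funext b; rw [h, ite_self]
  rw [this, PMF.bind_const]

lemma aux_replicate_stay {C : Ivl} {s : Finset Ivl}
    (h : memStepPMF F hF C s = PMF.pure s) (n : ℕ) :
    memRunAux F hF (PMF.pure s) (List.replicate n C) = PMF.pure s := by
  induction n with
  | zero => rfl
  | succ n ih =>
    rw [List.replicate_succ]
    show memRunAux F hF ((PMF.pure s).bind (fun S => memStepPMF F hF C S)) _ = _
    rw [PMF.pure_bind, h, ih]

lemma Pr_replicate_accept {C : Ivl} {s : Finset Ivl} (hq : F C s ≠ 0) (n : ℕ) :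
    1 - (ENNReal.ofReal (1 - F C s)) ^ n ≤ Pr F hF (List.replicate n C) s (takeNew s C) := by
  by_cases hfix : takeNew s C = s
  · have : Pr F hF (List.replicate n C) s (takeNew s C) = 1 := by
      unfold Pr
      rw [aux_replicate_stay F hF (memStep_eq_pure_of_fixed F hF hfix), hfix,
        PMF.pure_apply_self]
    rw [this]
    exact tsub_le_self.trans le_rfl
  · set p := ENNReal.ofReal (F C s) with hp
    set r := ENNReal.ofReal (1 - F C s) with hr
    have hq0 : 0 ≤ F C s := (hF C s).1
    have hq1 : F C s ≤ 1 := (hF C s).2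
    have hpr : p + r = 1 := by
      rw [hp, hr, ← ENNReal.ofReal_add hq0 (by linarith)]
      norm_num
    have hr1 : r ≤ 1 := by
      calc r ≤ p + r := le_add_self
      _ = 1 := hpr
    have hstep_s' : memStepPMF F hF C s (takeNew s C) = p := by
      rw [memStep_apply, if_pos rfl, if_neg hfix]
      simp [hp]
    have hstep_s : memStepPMF F hF C s s = 1 - p := by
      rw [memStep_apply, if_neg (fun hh => hfix hh.symm), if_pos rfl]
      simp [hp]
    have hrp : 1 - p = r := by
      refine ENNReal.sub_eq_of_eq_add (by simp [hp]) ?_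
      rw [add_comm, hpr]
    induction n with
    | zero => simp
    | succ n ih =>
      have hPabsorb : Pr F hF (List.replicate n C) (takeNew s C) (takeNew s C) = 1 := by
        unfold Pr
        rw [aux_replicate_stay F hF (memStep_eq_pure_of_fixed F hF (takeNew_absorb s C)),
          PMF.pure_apply_self]
      have expand : Pr F hF (List.replicate (n+1) C) s (takeNew s C)
          = ∑' t, memStepPMF F hF C s t * Pr F hF (List.replicate n C) t (takeNew s C) := by
        unfold Pr
        rw [List.replicate_succ]
        show memRunAux F hF ((PMF.pure s).bind (fun S => memStepPMF F hF C S)) _ _ = _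
        rw [PMF.pure_bind, memRunAux_eq_bind, PMF.bind_apply]
      have hsum : memStepPMF F hF C s (takeNew s C)
            * Pr F hF (List.replicate n C) (takeNew s C) (takeNew s C)
          + memStepPMF F hF C s s * Pr F hF (List.replicate n C) s (takeNew s C)
          ≤ ∑' t, memStepPMF F hF C s t * Pr F hF (List.replicate n C) t (takeNew s C) := by
        have := ENNReal.sum_le_tsum (s := ({takeNew s C, s} : Finset (Finset Ivl)))
          (f := fun t => memStepPMF F hF C s t * Pr F hF (List.replicate n C) t (takeNew s C))
        rwa [Finset.sum_pair hfix] at this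
      rw [expand]
      refine le_trans ?_ hsum
      rw [hstep_s', hstep_s, hPabsorb, hrp, mul_one]
      have key : p + r * (1 - r ^ n) + r ^ (n+1) = 1 := by
        rw [pow_succ, add_assoc, mul_comm (r ^ n) r, ← mul_add,
          tsub_add_cancel_of_le (pow_le_one' hr1 n), mul_one, hpr]
      rw [tsub_le_iff_right]
      calc (1 : ENNReal) = p + r * (1 - r ^ n) + r ^ (n+1) := key.symm
        _ ≤ p + r * Pr F hF (List.replicate n C) s (takeNew s C) + r ^ (n+1) := by
            gcongr
      
lemma block_lemma (C : Ivl) (s : Finset Ivl) (e : ℝ) (he0 : 0 < e) (he1 : e < 1) :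
    ∃ N : ℕ, C ∈ List.replicate N C ∧
      ENNReal.ofReal (1 - e) ≤
        Pr F hF (List.replicate N C) s (if F C s = 0 then s else takeNew s C) := by
  by_cases h : F C s = 0
  · refine ⟨1, List.mem_replicate.mpr ⟨one_ne_zero, rfl⟩, ?_⟩
    rw [if_pos h]
    have : Pr F hF (List.replicate 1 C) s s = 1 := by
      unfold Pr
      rw [aux_replicate_stay F hF (memStep_eq_pure_of_zero F hF h), PMF.pure_apply_self]
    rw [this]
    exact ENNReal.ofReal_le_one.mpr (by linarith)
  · have hq0 : 0 < F C s := lt_of_le_of_ne (hF C s).1 (Ne.symm h)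
    have hq1 : F C s ≤ 1 := (hF C s).2
    obtain ⟨N, hN⟩ := exists_pow_lt_of_lt_one he0 (show 1 - F C s < 1 by linarith)
    have hNne : N ≠ 0 := by
      intro h0
      rw [h0, pow_zero] at hN
      linarith
    refine ⟨N, List.mem_replicate.mpr ⟨hNne, rfl⟩, ?_⟩
    rw [if_neg h]
    refine le_trans ?_ (Pr_replicate_accept F hF h N)
    have h1 : (ENNReal.ofReal (1 - F C s)) ^ N = ENNReal.ofReal ((1 - F C s) ^ N) := by
      rw [ENNReal.ofReal_pow (by linarith)]
    rw [h1, ENNReal.ofReal_sub _ he0.le, ENNReal.ofReal_one]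
    exact tsub_le_tsub_left (ENNReal.ofReal_le_ofReal hN.le) 1

end Block

section Stage

variable (F : Ivl → Finset Ivl → ℝ)
    (hF : ∀ (I : Ivl) (S : Finset Ivl), F I S ∈ Set.Icc (0 : ℝ) 1)

lemma Pr_mul_chain {σ₁ σ₂ : List Ivl} {s₀ s₁ s₂ : Finset Ivl} {x y : ENNReal}
    (h₁ : x ≤ Pr F hF σ₁ s₀ s₁) (h₂ : y ≤ Pr F hF σ₂ s₁ s₂) :
    x * y ≤ Pr F hF (σ₁ ++ σ₂) s₀ s₂ :=
  (mul_le_mul' h₁ h₂).trans (Pr_chain F hF σ₁ σ₂ s₀ s₁ s₂)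

set_option maxHeartbeats 3000000 in
lemma stage_lemma (e : ℝ) (he0 : 0 < e) (he1 : e < 1) (s : Finset Ivl) (hs : s.card ≤ 1)
    (a b : ℝ) (hab : a < b) (hzone : ∀ J ∈ s, Set.Ioo a b ⊆ J.toSet) :
    ∃ (σ : List Ivl) (s' : Finset Ivl) (G₁ G₂ : Ivl) (a' b' : ℝ),
      (∀ I ∈ σ, I.toSet ⊆ Set.Ioo a b) ∧ (∀ I ∈ σ, I.length = (b - a)/20) ∧
      G₁ ∈ σ ∧ G₂ ∈ σ ∧ G₁.toSet ∩ G₂.toSet = ∅ ∧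
      a' < b' ∧ Set.Ioo a' b' ⊆ Set.Ioo a b ∧
      G₁.toSet ∩ Set.Ioo a' b' = ∅ ∧ G₂.toSet ∩ Set.Ioo a' b' = ∅ ∧
      s'.card ≤ 1 ∧ (∀ J ∈ s', Set.Ioo a' b' ⊆ J.toSet) ∧
      ENNReal.ofReal ((1 - e)^4) ≤ Pr F hF σ s s' := by
  set m : ℝ := (b - a)/20 with hmdef
  have hm : 0 < m := by rw [hmdef]; linarith
  have hab20 : b = a + 20*m := by rw [hmdef]; ring
  set p0 : ℝ := a + 8*m with hp0
  let Pt : ℝ → Ivl := fun t => ⟨p0 + t*m, p0 + t*m + m, by linarith⟩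
  have htS : ∀ t : ℝ, (Pt t).toSet = Set.Ico (p0 + t*m) (p0 + t*m + m) := fun t => rfl
  have hlen : ∀ t : ℝ, (Pt t).length = m := by
    intro t
    show (p0 + t*m + m) - (p0 + t*m) = m
    ring
  have hsub : ∀ t : ℝ, -2 ≤ t → t ≤ 3 → (Pt t).toSet ⊆ Set.Ioo a b := by
    intro t h1 h2 x hx
    rw [htS] at hx
    obtain ⟨hx1, hx2⟩ := hx
    have e1 := mul_le_mul_of_nonneg_right h1 hm.le
    have e2 := mul_le_mul_of_nonneg_right h2 hm.le
    constructor <;> [skip; skip] <;> rw [hab20] at * <;> nlinarith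
  have hconf : ∀ t t' : ℝ, t < t' + 1 → t' < t + 1 → (Pt t).Conflict (Pt t') := by
    intro t t' h1 h2
    have e1 := mul_lt_mul_of_pos_right h1 hm
    have e2 := mul_lt_mul_of_pos_right h2 hm
    refine ⟨max (p0 + t*m) (p0 + t'*m), ?_, ?_⟩ <;> rw [htS]
    · exact ⟨le_max_left _ _, max_lt (by nlinarith) (by nlinarith)⟩
    · exact ⟨le_max_right _ _, max_lt (by nlinarith) (by nlinarith)⟩
  have hdisj : ∀ t t' : ℝ, t + 1 ≤ t' → (Pt t).toSet ∩ (Pt t').toSet = ∅ := by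
    intro t t' h
    rw [htS, htS]
    apply Set.eq_empty_iff_forall_notMem.mpr
    rintro x ⟨⟨_, hx2⟩, ⟨hx3, _⟩⟩
    have := mul_le_mul_of_nonneg_right h hm.le
    nlinarith
  have hzlt : ∀ u v : ℝ, u < v → p0 + u*m < p0 + v*m := by
    intro u v h
    have := mul_lt_mul_of_pos_right h hm
    nlinarith
  have hzsub : ∀ u v : ℝ, -2 ≤ u → v ≤ 4 →
      Set.Ioo (p0 + u*m) (p0 + v*m) ⊆ Set.Ioo a b := by
    intro u v h1 h2 x hx
    obtain ⟨hx1, hx2⟩ := hx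
    have e1 := mul_le_mul_of_nonneg_right h1 hm.le
    have e2 := mul_le_mul_of_nonneg_right h2 hm.le
    constructor <;> rw [hab20] at * <;> nlinarith
  have hzinI : ∀ t u v : ℝ, t ≤ u → v ≤ t + 1 →
      Set.Ioo (p0 + u*m) (p0 + v*m) ⊆ (Pt t).toSet := by
    intro t u v h1 h2 x hx
    obtain ⟨hx1, hx2⟩ := hx
    rw [htS]
    have e1 := mul_le_mul_of_nonneg_right h1 hm.le
    have e2 := mul_le_mul_of_nonneg_right h2 hm.le
    exact ⟨by nlinarith, by nlinarith⟩
  have hzdisjL : ∀ t u v : ℝ, v ≤ t → (Pt t).toSet ∩ Set.Ioo (p0 + u*m) (p0 + v*m) = ∅ := by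
    intro t u v h
    rw [htS]
    apply Set.eq_empty_iff_forall_notMem.mpr
    rintro x ⟨⟨hx1, _⟩, ⟨_, hx4⟩⟩
    have := mul_le_mul_of_nonneg_right h hm.le
    nlinarith
  have hzdisjR : ∀ t u v : ℝ, t + 1 ≤ u → (Pt t).toSet ∩ Set.Ioo (p0 + u*m) (p0 + v*m) = ∅ := by
    intro t u v h
    rw [htS]
    apply Set.eq_empty_iff_forall_notMem.mpr
    rintro x ⟨⟨_, hx2⟩, ⟨hx3, _⟩⟩
    have := mul_le_mul_of_nonneg_right h hm.le
    nlinarith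
  have hconfJ : ∀ (J : Ivl) (t : ℝ), J ∈ s → -2 ≤ t → t ≤ 3 → J.Conflict (Pt t) :=
    fun J t hJ h1 h2 =>
      Ivl.conflict_comm (Ivl.conflict_of_subset ((hsub t h1 h2).trans (hzone J hJ)))
  have htake : ∀ t : ℝ, -2 ≤ t → t ≤ 3 → takeNew s (Pt t) = {Pt t} :=
    fun t h1 h2 => takeNew_eq_singleton (fun J hJ => hconfJ J t hJ h1 h2)
  have htakeP : ∀ t t' : ℝ, t < t' + 1 → t' < t + 1 → takeNew {Pt t} (Pt t') = {Pt t'} := by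
    intro t t' h1 h2
    apply takeNew_eq_singleton
    intro J hJ
    rw [Finset.mem_singleton] at hJ
    subst hJ
    exact hconf t t' h1 h2
  have h01 : (0:ℝ) ≤ 1 - e := by linarith
  have hofm2 : ENNReal.ofReal ((1-e)^4) ≤ ENNReal.ofReal (1-e) * ENNReal.ofReal (1-e) := by
    rw [← ENNReal.ofReal_mul h01]
    apply ENNReal.ofReal_le_ofReal
    calc (1-e)^4 ≤ (1-e)^2 := pow_le_pow_of_le_one h01 (by linarith) (by norm_num)
      _ = (1-e)*(1-e) := by ring
  have hofm3 : ENNReal.ofReal ((1-e)^4) ≤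
      ENNReal.ofReal (1-e) * (ENNReal.ofReal (1-e) * ENNReal.ofReal (1-e)) := by
    rw [← ENNReal.ofReal_mul h01, ← ENNReal.ofReal_mul h01]
    apply ENNReal.ofReal_le_ofReal
    calc (1-e)^4 ≤ (1-e)^3 := pow_le_pow_of_le_one h01 (by linarith) (by norm_num)
      _ = (1-e)*((1-e)*(1-e)) := by ring
  have hofm4 : ENNReal.ofReal ((1-e)^4) ≤
      ENNReal.ofReal (1-e) * (ENNReal.ofReal (1-e) *
        (ENNReal.ofReal (1-e) * ENNReal.ofReal (1-e))) := by
    rw [← ENNReal.ofReal_mul h01, ← ENNReal.ofReal_mul h01, ← ENNReal.ofReal_mul h01]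
    apply ENNReal.ofReal_le_ofReal
    exact le_of_eq (by ring)
  obtain ⟨N1, hmm1, hP1⟩ := block_lemma F hF (Pt 0) s e he0 he1
  by_cases hA : F (Pt 0) s = 0
  · rw [if_pos hA] at hP1
    obtain ⟨N2, hmm2, hP2⟩ := block_lemma F hF (Pt 2) s e he0 he1
    by_cases hB : F (Pt 2) s = 0
    · rw [if_pos hB] at hP2
      refine ⟨List.replicate N1 (Pt 0) ++ (List.replicate N2 (Pt 2)), s, (Pt 0), (Pt 2), p0 + (1)*m, p0 + (2)*m, ?_, ?_, ?_, ?_, ?_, ?_, ?_, ?_, ?_, ?_, ?_, ?_⟩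
      · intro I hI
        simp only [List.mem_append] at hI
        rcases hI with h|h <;> rw [List.eq_of_mem_replicate h] <;>
          exact hsub _ (by norm_num) (by norm_num)
      · intro I hI
        simp only [List.mem_append] at hI
        rcases hI with h|h <;> rw [List.eq_of_mem_replicate h] <;> exact hlen _
      · exact List.mem_append.mpr (Or.inl hmm1)
      · exact List.mem_append.mpr (Or.inr (hmm2))
      · exact hdisj (0) (2) (by norm_num)
      · exact hzlt (1) (2) (by norm_num)
      · exact hzsub (1) (2) (by norm_num) (by norm_num)
      · exact hzdisjR (0) (1) (2) (by norm_num)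
      · exact hzdisjL (2) (1) (2) (by norm_num)
      · exact hs
      · exact fun J hJ => (hzsub (1) (2) (by norm_num) (by norm_num)).trans (hzone J hJ)
      · exact le_trans hofm2 (Pr_mul_chain F hF hP1 hP2)
    · rw [if_neg hB, htake 2 (by norm_num) (by norm_num)] at hP2
      obtain ⟨N3, hmm3, hP3⟩ := block_lemma F hF (Pt 2.75) ({Pt 2} : Finset Ivl) e he0 he1
      by_cases hC : F (Pt 2.75) {Pt 2} = 0
      · rw [if_pos hC] at hP3
        refine ⟨List.replicate N1 (Pt 0) ++ (List.replicate N2 (Pt 2) ++ (List.replicate N3 (Pt 2.75))), ({Pt 2} : Finset Ivl), (Pt 0), (Pt 2.75), p0 + (2)*m, p0 + (2.75)*m, ?_, ?_, ?_, ?_, ?_, ?_, ?_, ?_, ?_, ?_, ?_, ?_⟩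
        · intro I hI
          simp only [List.mem_append] at hI
          rcases hI with h|h|h <;> rw [List.eq_of_mem_replicate h] <;>
            exact hsub _ (by norm_num) (by norm_num)
        · intro I hI
          simp only [List.mem_append] at hI
          rcases hI with h|h|h <;> rw [List.eq_of_mem_replicate h] <;> exact hlen _
        · exact List.mem_append.mpr (Or.inl hmm1)
        · exact List.mem_append.mpr (Or.inr (List.mem_append.mpr (Or.inr (hmm3))))
        · exact hdisj (0) (2.75) (by norm_num)
        · exact hzlt (2) (2.75) (by norm_num)
        · exact hzsub (2) (2.75) (by norm_num) (by norm_num)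
        · exact hzdisjR (0) (2) (2.75) (by norm_num)
        · exact hzdisjL (2.75) (2) (2.75) (by norm_num)
        · simp
        · intro J hJ
          rw [Finset.mem_singleton] at hJ
          subst hJ
          exact hzinI (2) (2) (2.75) (by norm_num) (by norm_num)
        · exact le_trans hofm3 (Pr_mul_chain F hF hP1 (Pr_mul_chain F hF hP2 hP3))
      · rw [if_neg hC, htakeP 2 2.75 (by norm_num) (by norm_num)] at hP3
        refine ⟨List.replicate N1 (Pt 0) ++ (List.replicate N2 (Pt 2) ++ (List.replicate N3 (Pt 2.75))), ({Pt 2.75} : Finset Ivl), (Pt 0), (Pt 2), p0 + (3)*m, p0 + (3.75)*m, ?_, ?_, ?_, ?_, ?_, ?_, ?_, ?_, ?_, ?_, ?_, ?_⟩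
        · intro I hI
          simp only [List.mem_append] at hI
          rcases hI with h|h|h <;> rw [List.eq_of_mem_replicate h] <;>
            exact hsub _ (by norm_num) (by norm_num)
        · intro I hI
          simp only [List.mem_append] at hI
          rcases hI with h|h|h <;> rw [List.eq_of_mem_replicate h] <;> exact hlen _
        · exact List.mem_append.mpr (Or.inl hmm1)
        · exact List.mem_append.mpr (Or.inr (List.mem_append.mpr (Or.inl hmm2)))
        · exact hdisj (0) (2) (by norm_num)
        · exact hzlt (3) (3.75) (by norm_num)
        · exact hzsub (3) (3.75) (by norm_num) (by norm_num)
        · exact hzdisjR (0) (3) (3.75) (by norm_num)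
        · exact hzdisjR (2) (3) (3.75) (by norm_num)
        · simp
        · intro J hJ
          rw [Finset.mem_singleton] at hJ
          subst hJ
          exact hzinI (2.75) (3) (3.75) (by norm_num) (by norm_num)
        · exact le_trans hofm3 (Pr_mul_chain F hF hP1 (Pr_mul_chain F hF hP2 hP3))
  · rw [if_neg hA, htake 0 (by norm_num) (by norm_num)] at hP1
    obtain ⟨N2, hmm2, hP2⟩ := block_lemma F hF (Pt 0.75) ({Pt 0} : Finset Ivl) e he0 he1
    by_cases hR1 : F (Pt 0.75) {Pt 0} = 0
    · rw [if_pos hR1] at hP2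
      obtain ⟨N3, hmm3, hP3⟩ := block_lemma F hF (Pt (-0.75)) ({Pt 0} : Finset Ivl) e he0 he1
      by_cases hL1 : F (Pt (-0.75)) {Pt 0} = 0
      · rw [if_pos hL1] at hP3
        refine ⟨List.replicate N1 (Pt 0) ++ (List.replicate N2 (Pt 0.75) ++ (List.replicate N3 (Pt (-0.75)))), ({Pt 0} : Finset Ivl), (Pt (-0.75)), (Pt 0.75), p0 + (0.25)*m, p0 + (0.75)*m, ?_, ?_, ?_, ?_, ?_, ?_, ?_, ?_, ?_, ?_, ?_, ?_⟩
        · intro I hI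
          simp only [List.mem_append] at hI
          rcases hI with h|h|h <;> rw [List.eq_of_mem_replicate h] <;>
            exact hsub _ (by norm_num) (by norm_num)
        · intro I hI
          simp only [List.mem_append] at hI
          rcases hI with h|h|h <;> rw [List.eq_of_mem_replicate h] <;> exact hlen _
        · exact List.mem_append.mpr (Or.inr (List.mem_append.mpr (Or.inr (hmm3))))
        · exact List.mem_append.mpr (Or.inr (List.mem_append.mpr (Or.inl hmm2)))
        · exact hdisj (-0.75) (0.75) (by norm_num)
        · exact hzlt (0.25) (0.75) (by norm_num)
        · exact hzsub (0.25) (0.75) (by norm_num) (by norm_num)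
        · exact hzdisjR (-0.75) (0.25) (0.75) (by norm_num)
        · exact hzdisjL (0.75) (0.25) (0.75) (by norm_num)
        · simp
        · intro J hJ
          rw [Finset.mem_singleton] at hJ
          subst hJ
          exact hzinI (0) (0.25) (0.75) (by norm_num) (by norm_num)
        · exact le_trans hofm3 (Pr_mul_chain F hF hP1 (Pr_mul_chain F hF hP2 hP3))
      · rw [if_neg hL1, htakeP 0 (-0.75) (by norm_num) (by norm_num)] at hP3
        obtain ⟨N4, hmm4, hP4⟩ := block_lemma F hF (Pt (-1.5)) ({Pt (-0.75)} : Finset Ivl) e he0 he1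
        by_cases hL2 : F (Pt (-1.5)) {Pt (-0.75)} = 0
        · rw [if_pos hL2] at hP4
          refine ⟨List.replicate N1 (Pt 0) ++ (List.replicate N2 (Pt 0.75) ++ (List.replicate N3 (Pt (-0.75)) ++ (List.replicate N4 (Pt (-1.5))))), ({Pt (-0.75)} : Finset Ivl), (Pt (-1.5)), (Pt 0.75), p0 + (-0.5)*m, p0 + (0.25)*m, ?_, ?_, ?_, ?_, ?_, ?_, ?_, ?_, ?_, ?_, ?_, ?_⟩
          · intro I hI
            simp only [List.mem_append] at hI
            rcases hI with h|h|h|h <;> rw [List.eq_of_mem_replicate h] <;>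
              exact hsub _ (by norm_num) (by norm_num)
          · intro I hI
            simp only [List.mem_append] at hI
            rcases hI with h|h|h|h <;> rw [List.eq_of_mem_replicate h] <;> exact hlen _
          · exact List.mem_append.mpr (Or.inr (List.mem_append.mpr (Or.inr (List.mem_append.mpr (Or.inr (hmm4))))))
          · exact List.mem_append.mpr (Or.inr (List.mem_append.mpr (Or.inl hmm2)))
          · exact hdisj (-1.5) (0.75) (by norm_num)
          · exact hzlt (-0.5) (0.25) (by norm_num)
          · exact hzsub (-0.5) (0.25) (by norm_num) (by norm_num)
          · exact hzdisjR (-1.5) (-0.5) (0.25) (by norm_num)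
          · exact hzdisjL (0.75) (-0.5) (0.25) (by norm_num)
          · simp
          · intro J hJ
            rw [Finset.mem_singleton] at hJ
            subst hJ
            exact hzinI (-0.75) (-0.5) (0.25) (by norm_num) (by norm_num)
          · exact le_trans hofm4 (Pr_mul_chain F hF hP1 (Pr_mul_chain F hF hP2 (Pr_mul_chain F hF hP3 hP4)))
        · rw [if_neg hL2, htakeP (-0.75) (-1.5) (by norm_num) (by norm_num)] at hP4
          refine ⟨List.replicate N1 (Pt 0) ++ (List.replicate N2 (Pt 0.75) ++ (List.replicate N3 (Pt (-0.75)) ++ (List.replicate N4 (Pt (-1.5))))), ({Pt (-1.5)} : Finset Ivl), (Pt (-0.75)), (Pt 0.75), p0 + (-1.5)*m, p0 + (-0.75)*m, ?_, ?_, ?_, ?_, ?_, ?_, ?_, ?_, ?_, ?_, ?_, ?_⟩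
          · intro I hI
            simp only [List.mem_append] at hI
            rcases hI with h|h|h|h <;> rw [List.eq_of_mem_replicate h] <;>
              exact hsub _ (by norm_num) (by norm_num)
          · intro I hI
            simp only [List.mem_append] at hI
            rcases hI with h|h|h|h <;> rw [List.eq_of_mem_replicate h] <;> exact hlen _
          · exact List.mem_append.mpr (Or.inr (List.mem_append.mpr (Or.inr (List.mem_append.mpr (Or.inl hmm3)))))
          · exact List.mem_append.mpr (Or.inr (List.mem_append.mpr (Or.inl hmm2)))
          · exact hdisj (-0.75) (0.75) (by norm_num)
          · exact hzlt (-1.5) (-0.75) (by norm_num)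
          · exact hzsub (-1.5) (-0.75) (by norm_num) (by norm_num)
          · exact hzdisjL (-0.75) (-1.5) (-0.75) (by norm_num)
          · exact hzdisjL (0.75) (-1.5) (-0.75) (by norm_num)
          · simp
          · intro J hJ
            rw [Finset.mem_singleton] at hJ
            subst hJ
            exact hzinI (-1.5) (-1.5) (-0.75) (by norm_num) (by norm_num)
          · exact le_trans hofm4 (Pr_mul_chain F hF hP1 (Pr_mul_chain F hF hP2 (Pr_mul_chain F hF hP3 hP4)))
    · rw [if_neg hR1, htakeP 0 0.75 (by norm_num) (by norm_num)] at hP2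
      obtain ⟨N3, hmm3, hP3⟩ := block_lemma F hF (Pt 1.5) ({Pt 0.75} : Finset Ivl) e he0 he1
      by_cases hR2 : F (Pt 1.5) {Pt 0.75} = 0
      · rw [if_pos hR2] at hP3
        refine ⟨List.replicate N1 (Pt 0) ++ (List.replicate N2 (Pt 0.75) ++ (List.replicate N3 (Pt 1.5))), ({Pt 0.75} : Finset Ivl), (Pt 0), (Pt 1.5), p0 + (1)*m, p0 + (1.5)*m, ?_, ?_, ?_, ?_, ?_, ?_, ?_, ?_, ?_, ?_, ?_, ?_⟩
        · intro I hI
          simp only [List.mem_append] at hI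
          rcases hI with h|h|h <;> rw [List.eq_of_mem_replicate h] <;>
            exact hsub _ (by norm_num) (by norm_num)
        · intro I hI
          simp only [List.mem_append] at hI
          rcases hI with h|h|h <;> rw [List.eq_of_mem_replicate h] <;> exact hlen _
        · exact List.mem_append.mpr (Or.inl hmm1)
        · exact List.mem_append.mpr (Or.inr (List.mem_append.mpr (Or.inr (hmm3))))
        · exact hdisj (0) (1.5) (by norm_num)
        · exact hzlt (1) (1.5) (by norm_num)
        · exact hzsub (1) (1.5) (by norm_num) (by norm_num)
        · exact hzdisjR (0) (1) (1.5) (by norm_num)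
        · exact hzdisjL (1.5) (1) (1.5) (by norm_num)
        · simp
        · intro J hJ
          rw [Finset.mem_singleton] at hJ
          subst hJ
          exact hzinI (0.75) (1) (1.5) (by norm_num) (by norm_num)
        · exact le_trans hofm3 (Pr_mul_chain F hF hP1 (Pr_mul_chain F hF hP2 hP3))
      · rw [if_neg hR2, htakeP 0.75 1.5 (by norm_num) (by norm_num)] at hP3
        obtain ⟨N4, hmm4, hP4⟩ := block_lemma F hF (Pt 2.25) ({Pt 1.5} : Finset Ivl) e he0 he1
        by_cases hR3 : F (Pt 2.25) {Pt 1.5} = 0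
        · rw [if_pos hR3] at hP4
          refine ⟨List.replicate N1 (Pt 0) ++ (List.replicate N2 (Pt 0.75) ++ (List.replicate N3 (Pt 1.5) ++ (List.replicate N4 (Pt 2.25)))), ({Pt 1.5} : Finset Ivl), (Pt 0), (Pt 2.25), p0 + (1.5)*m, p0 + (2.25)*m, ?_, ?_, ?_, ?_, ?_, ?_, ?_, ?_, ?_, ?_, ?_, ?_⟩
          · intro I hI
            simp only [List.mem_append] at hI
            rcases hI with h|h|h|h <;> rw [List.eq_of_mem_replicate h] <;>
              exact hsub _ (by norm_num) (by norm_num)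
          · intro I hI
            simp only [List.mem_append] at hI
            rcases hI with h|h|h|h <;> rw [List.eq_of_mem_replicate h] <;> exact hlen _
          · exact List.mem_append.mpr (Or.inl hmm1)
          · exact List.mem_append.mpr (Or.inr (List.mem_append.mpr (Or.inr (List.mem_append.mpr (Or.inr (hmm4))))))
          · exact hdisj (0) (2.25) (by norm_num)
          · exact hzlt (1.5) (2.25) (by norm_num)
          · exact hzsub (1.5) (2.25) (by norm_num) (by norm_num)
          · exact hzdisjR (0) (1.5) (2.25) (by norm_num)
          · exact hzdisjL (2.25) (1.5) (2.25) (by norm_num)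
          · simp
          · intro J hJ
            rw [Finset.mem_singleton] at hJ
            subst hJ
            exact hzinI (1.5) (1.5) (2.25) (by norm_num) (by norm_num)
          · exact le_trans hofm4 (Pr_mul_chain F hF hP1 (Pr_mul_chain F hF hP2 (Pr_mul_chain F hF hP3 hP4)))
        · rw [if_neg hR3, htakeP 1.5 2.25 (by norm_num) (by norm_num)] at hP4
          refine ⟨List.replicate N1 (Pt 0) ++ (List.replicate N2 (Pt 0.75) ++ (List.replicate N3 (Pt 1.5) ++ (List.replicate N4 (Pt 2.25)))), ({Pt 2.25} : Finset Ivl), (Pt 0), (Pt 1.5), p0 + (2.5)*m, p0 + (3.25)*m, ?_, ?_, ?_, ?_, ?_, ?_, ?_, ?_, ?_, ?_, ?_, ?_⟩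
          · intro I hI
            simp only [List.mem_append] at hI
            rcases hI with h|h|h|h <;> rw [List.eq_of_mem_replicate h] <;>
              exact hsub _ (by norm_num) (by norm_num)
          · intro I hI
            simp only [List.mem_append] at hI
            rcases hI with h|h|h|h <;> rw [List.eq_of_mem_replicate h] <;> exact hlen _
          · exact List.mem_append.mpr (Or.inl hmm1)
          · exact List.mem_append.mpr (Or.inr (List.mem_append.mpr (Or.inr (List.mem_append.mpr (Or.inl hmm3)))))
          · exact hdisj (0) (1.5) (by norm_num)
          · exact hzlt (2.5) (3.25) (by norm_num)
          · exact hzsub (2.5) (3.25) (by norm_num) (by norm_num)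
          · exact hzdisjR (0) (2.5) (3.25) (by norm_num)
          · exact hzdisjR (1.5) (2.5) (3.25) (by norm_num)
          · simp
          · intro J hJ
            rw [Finset.mem_singleton] at hJ
            subst hJ
            exact hzinI (2.25) (2.5) (3.25) (by norm_num) (by norm_num)
          · exact le_trans hofm4 (Pr_mul_chain F hF hP1 (Pr_mul_chain F hF hP2 (Pr_mul_chain F hF hP3 hP4)))

end Stage

section Main

variable (F : Ivl → Finset Ivl → ℝ)
    (hF : ∀ (I : Ivl) (S : Finset Ivl), F I S ∈ Set.Icc (0 : ℝ) 1)

lemma main_induction (k : ℕ) (e : ℝ) (he0 : 0 < e) (he1 : e < 1) :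
    ∀ (s : Finset Ivl), s.card ≤ 1 → ∀ a b : ℝ, a < b → (∀ J ∈ s, Set.Ioo a b ⊆ J.toSet) →
    ∃ (σ : List Ivl) (s' : Finset Ivl) (G : Finset Ivl) (L : Finset ℝ),
      (∀ I ∈ σ, I.toSet ⊆ Set.Ioo a b) ∧ L.card ≤ k ∧ (∀ I ∈ σ, I.length ∈ L) ∧
      (∀ I ∈ G, I ∈ σ) ∧ Ivl.Feasible G ∧ G.card = 2*k ∧ s'.card ≤ 1 ∧
      ENNReal.ofReal ((1-e)^(4*k)) ≤ Pr F hF σ s s' := by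
  induction k with
  | zero =>
    intro s hs a b hab hzone
    refine ⟨[], s, ∅, ∅, by simp, by simp, by simp, by simp, ?_, by simp, hs, ?_⟩
    · intro I hI
      simp at hI
    · rw [Nat.mul_zero, pow_zero, ENNReal.ofReal_one, Pr_nil]
  | succ k ih =>
    intro s hs a b hab hzone
    obtain ⟨σ₁, s₁, G₁, G₂, a', b', hsub₁, hlen₁, hG₁σ, hG₂σ, hG12, hab', hzz, hz1, hz2,
      hs₁, hzone₁, hP₁⟩ := stage_lemma F hF e he0 he1 s hs a b hab hzone
    obtain ⟨σ₂, s₂, G, L, hsub₂, hLcard, hlen₂, hGσ₂, hGfeas, hGcard, hs₂, hP₂⟩ :=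
      ih s₁ hs₁ a' b' hab' hzone₁
    have hGz : ∀ X ∈ G, X.toSet ⊆ Set.Ioo a' b' := fun X hX => hsub₂ X (hGσ₂ X hX)
    have key : ∀ (W X : Ivl), W.toSet ∩ Set.Ioo a' b' = ∅ → X.toSet ⊆ Set.Ioo a' b' →
        W.toSet ∩ X.toSet = ∅ := by
      intro W X h1 h2
      apply Set.eq_empty_iff_forall_notMem.mpr
      rintro x ⟨hx1, hx2⟩
      have : x ∈ W.toSet ∩ Set.Ioo a' b' := ⟨hx1, h2 hx2⟩
      rw [h1] at this
      exact this
    have hne12 : G₁ ≠ G₂ := by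
      intro h
      rw [h] at hG12
      obtain ⟨x, hx⟩ := G₂.nonempty_toSet
      exact absurd hG12 (by rw [← Set.not_nonempty_iff_eq_empty]; push_neg; exact ⟨x, hx, hx⟩)
    have hG1G : G₁ ∉ G := by
      intro h
      have := key G₁ G₁ hz1 (hGz G₁ h)
      obtain ⟨x, hx⟩ := G₁.nonempty_toSet
      rw [Set.eq_empty_iff_forall_notMem] at this
      exact this x ⟨hx, hx⟩
    have hG2G : G₂ ∉ G := by
      intro h
      have := key G₂ G₂ hz2 (hGz G₂ h)
      obtain ⟨x, hx⟩ := G₂.nonempty_toSet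
      rw [Set.eq_empty_iff_forall_notMem] at this
      exact this x ⟨hx, hx⟩
    refine ⟨σ₁ ++ σ₂, s₂, insert G₁ (insert G₂ G), insert ((b-a)/20) L,
      ?_, ?_, ?_, ?_, ?_, ?_, hs₂, ?_⟩
    · intro I hI
      rcases List.mem_append.mp hI with h | h
      · exact hsub₁ I h
      · exact (hsub₂ I h).trans hzz
    · exact (Finset.card_insert_le _ _).trans (by omega)
    · intro I hI
      rcases List.mem_append.mp hI with h | h
      · rw [hlen₁ I h]
        exact Finset.mem_insert_self _ _
      · exact Finset.mem_insert_of_mem (hlen₂ I h)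
    · intro I hI
      rcases Finset.mem_insert.mp hI with h | h
      · subst h
        exact List.mem_append.mpr (Or.inl hG₁σ)
      rcases Finset.mem_insert.mp h with h' | h'
      · subst h'
        exact List.mem_append.mpr (Or.inl hG₂σ)
      · exact List.mem_append.mpr (Or.inr (hGσ₂ I h'))
    · -- feasibility
      intro I hI J hJ hne
      have hcases : ∀ X, X ∈ insert G₁ (insert G₂ G) → X = G₁ ∨ X = G₂ ∨ X ∈ G := by
        intro X hX
        rcases Finset.mem_insert.mp hX with h | h
        · exact Or.inl h
        rcases Finset.mem_insert.mp h with h' | h'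
        · exact Or.inr (Or.inl h')
        · exact Or.inr (Or.inr h')
      have hd : I.toSet ∩ J.toSet = ∅ → ¬ I.Conflict J := Ivl.not_conflict_of_disjoint
      have hG12' : G₂.toSet ∩ G₁.toSet = ∅ := by rw [Set.inter_comm]; exact hG12
      rcases hcases I hI with hI' | hI' | hI' <;> rcases hcases J hJ with hJ' | hJ' | hJ'
      · exact absurd (hI'.trans hJ'.symm) hne
      · subst hI'; subst hJ'; exact hd hG12
      · subst hI'; exact hd (key I J hz1 (hGz J hJ'))
      · subst hI'; subst hJ'; exact hd hG12'
      · exact absurd (hI'.trans hJ'.symm) hne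
      · subst hI'; exact hd (key I J hz2 (hGz J hJ'))
      · subst hJ'
        exact fun c =>
          (Ivl.not_conflict_of_disjoint (key J I hz1 (hGz I hI'))) (Ivl.conflict_comm c)
      · subst hJ'
        exact fun c =>
          (Ivl.not_conflict_of_disjoint (key J I hz2 (hGz I hI'))) (Ivl.conflict_comm c)
      · exact hGfeas I hI' J hJ' hne
    · rw [Finset.card_insert_of_notMem (by
          intro h
          rcases Finset.mem_insert.mp h with h' | h'
          · exact hne12 h'
          · exact hG1G h'),
        Finset.card_insert_of_notMem hG2G, hGcard]
      ring
    · have h01 : (0:ℝ) ≤ 1 - e := by linarith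
      have heq : ENNReal.ofReal ((1-e)^(4*(k+1)))
          = ENNReal.ofReal ((1-e)^4) * ENNReal.ofReal ((1-e)^(4*k)) := by
        rw [← ENNReal.ofReal_mul (by positivity), ← pow_add]
        ring_nf
      rw [heq]
      exact Pr_mul_chain F hF hP₁ hP₂

end Main

/-- No memoryless randomized algorithm beats `2k` for unweighted interval selection with
revocable decisions and `k` distinct lengths: for every acceptance-probability function `F`
and every `p ∈ (0,1)`, there is an instance with at most `k` distinct lengths whose optimum
is at least `2k`, on which the final solution has at most one interval with probability at
least `p`. -/
theorem memoryless_randomized_lower_bound_two_k (F : Ivl → Finset Ivl → ℝ)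
    (hF : ∀ (I : Ivl) (S : Finset Ivl), F I S ∈ Set.Icc (0 : ℝ) 1)
    (k : ℕ) (hk : 1 ≤ k) (p : ℝ) (hp : p ∈ Set.Ioo (0 : ℝ) 1) :
    ∃ σ : List Ivl, (σ.map Ivl.length).toFinset.card ≤ k ∧ 2 * k ≤ opt σ ∧
      ENNReal.ofReal p ≤
        (memRun F hF σ).toOuterMeasure {S : Finset Ivl | S.card ≤ 1} := by
  obtain ⟨hp0, hp1⟩ := hp
  set e : ℝ := (1 - p) / (4*k + 1) with hedef
  have hK : (0:ℝ) < 4*k + 1 := by positivity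
  have he0 : 0 < e := by
    rw [hedef]
    apply div_pos (by linarith) hK
  have he1 : e < 1 := by
    rw [hedef, div_lt_one hK]
    have : (1:ℝ) ≤ 4*k + 1 := by
      have : (0:ℝ) ≤ (k:ℝ) := Nat.cast_nonneg k
      linarith
    linarith
  obtain ⟨σ, s', G, L, hsub, hLcard, hlen, hGσ, hGfeas, hGcard, hs', hP⟩ :=
    main_induction F hF k e he0 he1 ∅ (by simp) 0 1 (by norm_num) (by simp)
  refine ⟨σ, ?_, ?_, ?_⟩
  · -- at most k lengths
    apply le_trans (Finset.card_le_card ?_) hLcard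
    intro x hx
    rw [List.mem_toFinset] at hx
    obtain ⟨I, hI, rfl⟩ := List.mem_map.mp hx
    exact hlen I hI
  · -- opt ≥ 2k
    have hmem : G ∈ (σ.toFinset.powerset.filter (fun T => Ivl.Feasible T)) := by
      rw [Finset.mem_filter, Finset.mem_powerset]
      exact ⟨fun I hI => List.mem_toFinset.mpr (hGσ I hI), hGfeas⟩
    have := Finset.le_sup (f := Finset.card) hmem
    rw [hGcard] at this
    exact this
  · -- probability bound
    have hple : p ≤ (1-e)^(4*k) := by
      have hmul : (4*k:ℝ) * e ≤ 1 - p := by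
        have heq : (4*k:ℝ) * e = 4*k*(1-p) / (4*k+1) := by
          rw [hedef]; ring
        rw [heq, div_le_iff₀ hK]
        nlinarith [Nat.cast_nonneg (α := ℝ) k]
      have hb := one_add_mul_le_pow (a := -e) (by linarith) (4*k)
      have h1 : ((1:ℝ) + -e) = 1 - e := by ring
      rw [h1] at hb
      push_cast at hb
      calc p ≤ 1 - 4*k*e := by linarith
        _ ≤ (1-e)^(4*k) := by
            refine le_trans (le_of_eq ?_) hb
            push_cast
            ring
    have h2 : (memRun F hF σ) s' ≤
        (memRun F hF σ).toOuterMeasure {S : Finset Ivl | S.card ≤ 1} := by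
      rw [PMF.toOuterMeasure_apply]
      have hle := ENNReal.le_tsum
        (f := fun x => Set.indicator {S : Finset Ivl | S.card ≤ 1} (memRun F hF σ) x) s'
      rwa [Set.indicator_of_mem (show s' ∈ {S : Finset Ivl | S.card ≤ 1} from hs')] at hle
    calc ENNReal.ofReal p ≤ ENNReal.ofReal ((1-e)^(4*k)) := ENNReal.ofReal_le_ofReal hple
      _ ≤ Pr F hF σ ∅ s' := hP
      _ = (memRun F hF σ) s' := rfl
      _ ≤ _ := h2
end

section
/- Let I1 = [0,2), I2 = [1,3), I3 = [2,4) and I3' = [−1,1). Then opt([I1,I2,I3]) = 2 and opt([I1,I2,I3']) = 2, and for every online interval-selection algorithm A with revocable acceptances, |A([I1,I2,I3])| + |A([I1,I2,I3'])| ≤ 3. (This is the deterministic core, via Yao's principle with the adversary choosing each of the two sequences with probability 1/2, of the lemma that no randomized algorithm achieves a competitive ratio better than 4/3 for unweighted instances with no proper inclusions.) -/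
open scoped Classical

noncomputable def i1 : Ivl := ⟨0, 2, by norm_num⟩
noncomputable def i2 : Ivl := ⟨1, 3, by norm_num⟩
noncomputable def i3 : Ivl := ⟨2, 4, by norm_num⟩
noncomputable def i3' : Ivl := ⟨-1, 1, by norm_num⟩

-- auxiliary lemmas
lemma ne12 : i1 ≠ i2 := by
  intro h; have := congrArg Ivl.s h; simp [i1, i2] at this
lemma ne13 : i1 ≠ i3 := by
  intro h; have := congrArg Ivl.s h; simp [i1, i3] at this
lemma ne23 : i2 ≠ i3 := by
  intro h; have := congrArg Ivl.s h; simp [i2, i3] at this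
lemma ne13' : i1 ≠ i3' := by
  intro h; have := congrArg Ivl.s h; simp [i1, i3'] at this
lemma ne23' : i2 ≠ i3' := by
  intro h; have := congrArg Ivl.s h; simp [i2, i3'] at this; linarith

lemma conflict_comm {I J : Ivl} : Ivl.Conflict I J ↔ Ivl.Conflict J I := by
  unfold Ivl.Conflict; rw [Set.inter_comm]

lemma conf12 : Ivl.Conflict i1 i2 :=
  ⟨1, by constructor <;> constructor <;> (simp [Ivl.toSet, i1, i2]; try norm_num)⟩
lemma conf23 : Ivl.Conflict i2 i3 :=
  ⟨2, by constructor <;> constructor <;> (simp [Ivl.toSet, i2, i3]; try norm_num)⟩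
lemma conf13' : Ivl.Conflict i1 i3' :=
  ⟨0, by constructor <;> constructor <;> (simp [Ivl.toSet, i1, i3']; try norm_num)⟩

lemma nconf13 : ¬ Ivl.Conflict i1 i3 := by
  rintro ⟨x, ⟨-, h1⟩, h2, -⟩
  simp [Ivl.toSet, i1, i3] at h1 h2; linarith
lemma nconf23' : ¬ Ivl.Conflict i2 i3' := by
  rintro ⟨x, ⟨h1, -⟩, -, h2⟩
  simp [Ivl.toSet, i2, i3'] at h1 h2; linarith

lemma feas13 : Ivl.Feasible ({i3, i1} : Finset Ivl) := by
  intro I hI J hJ hne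
  simp only [Finset.mem_insert, Finset.mem_singleton] at hI hJ
  rcases hI with rfl | rfl <;> rcases hJ with rfl | rfl <;>
    first
      | exact absurd rfl hne
      | exact nconf13
      | exact fun h => nconf13 (conflict_comm.mp h)

lemma feas23' : Ivl.Feasible ({i3', i2} : Finset Ivl) := by
  intro I hI J hJ hne
  simp only [Finset.mem_insert, Finset.mem_singleton] at hI hJ
  rcases hI with rfl | rfl <;> rcases hJ with rfl | rfl <;>
    first
      | exact absurd rfl hne
      | exact nconf23'
      | exact fun h => nconf23' (conflict_comm.mp h)

lemma card_le_two_of_subset_pair {T : Finset Ivl} {a b : Ivl} (hT : T ⊆ {a, b}) :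
    T.card ≤ 2 := by
  calc T.card ≤ ({a, b} : Finset Ivl).card := Finset.card_le_card hT
    _ ≤ 2 := by
        calc ({a, b} : Finset Ivl).card ≤ ({b} : Finset Ivl).card + 1 :=
              Finset.card_insert_le a {b}
          _ = 2 := by simp

lemma card_le_one_of_subset_pair {T : Finset Ivl} {a b : Ivl} (hT : T ⊆ {a, b})
    (h : ¬ (a ∈ T ∧ b ∈ T)) : T.card ≤ 1 := by
  by_contra hc
  push_neg at hc
  have h2 : 2 ≤ T.card := hc
  have hcard : ({a, b} : Finset Ivl).card ≤ T.card := by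
    calc ({a, b} : Finset Ivl).card ≤ 2 := by
          calc ({a, b} : Finset Ivl).card ≤ ({b} : Finset Ivl).card + 1 :=
                Finset.card_insert_le a {b}
            _ = 2 := by simp
      _ ≤ T.card := h2
  have : T = {a, b} := Finset.eq_of_subset_of_card_le hT hcard
  subst this
  exact h ⟨by simp, by simp⟩

lemma opt_eq_two (x : Ivl) (hx1 : x ≠ i1) (hx2 : x ≠ i2)
    (hfeas : Ivl.Feasible ({x, i1} : Finset Ivl) ∨ Ivl.Feasible ({x, i2} : Finset Ivl)) :
    opt [i1, i2, x] = 2 := by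
  apply le_antisymm
  · apply Finset.sup_le
    intro T hT
    simp only [Finset.mem_filter, Finset.mem_powerset] at hT
    obtain ⟨hsub, hfT⟩ := hT
    have hsub' : T ⊆ ({i1, i2, x} : Finset Ivl) := by
      intro y hy
      have := hsub hy
      simp only [List.toFinset_cons, List.toFinset_nil, LawfulSingleton.insert_empty_eq] at this
      exact this
    by_contra hc
    push_neg at hc
    have h3 : 3 ≤ T.card := hc
    have hcard3 : ({i1, i2, x} : Finset Ivl).card ≤ T.card := by
      calc ({i1, i2, x} : Finset Ivl).card ≤ 3 := by
            calc ({i1, i2, x} : Finset Ivl).card ≤ ({i2, x} : Finset Ivl).card + 1 :=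
                  Finset.card_insert_le _ _
              _ ≤ (({x} : Finset Ivl).card + 1) + 1 := by
                  exact Nat.add_le_add_right (Finset.card_insert_le _ _) 1
              _ = 3 := by simp
        _ ≤ T.card := h3
    have hTeq : T = ({i1, i2, x} : Finset Ivl) := Finset.eq_of_subset_of_card_le hsub' hcard3
    have h1 : i1 ∈ T := by rw [hTeq]; simp
    have h2 : i2 ∈ T := by rw [hTeq]; simp
    exact hfT i1 h1 i2 h2 ne12 conf12
  · rcases hfeas with hf | hf
    · have hmem : ({x, i1} : Finset Ivl) ∈
          (([i1, i2, x] : List Ivl).toFinset.powerset.filter (fun T => Ivl.Feasible T)) := by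
        simp only [Finset.mem_filter, Finset.mem_powerset]
        refine ⟨?_, hf⟩
        intro y hy
        simp only [Finset.mem_insert, Finset.mem_singleton] at hy
        rcases hy with rfl | rfl <;> simp
      have := Finset.le_sup (f := Finset.card) hmem
      have hc : ({x, i1} : Finset Ivl).card = 2 := by
        rw [Finset.card_insert_of_notMem (by simpa using hx1), Finset.card_singleton]
      rw [hc] at this
      exact this
    · have hmem : ({x, i2} : Finset Ivl) ∈
          (([i1, i2, x] : List Ivl).toFinset.powerset.filter (fun T => Ivl.Feasible T)) := by
        simp only [Finset.mem_filter, Finset.mem_powerset]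
        refine ⟨?_, hf⟩
        intro y hy
        simp only [Finset.mem_insert, Finset.mem_singleton] at hy
        rcases hy with rfl | rfl <;> simp
      have := Finset.le_sup (f := Finset.card) hmem
      have hc : ({x, i2} : Finset Ivl).card = 2 := by
        rw [Finset.card_insert_of_notMem (by simpa using hx2), Finset.card_singleton]
      rw [hc] at this
      exact this

/-- Deterministic core of the `4/3` randomized lower bound for instances with no proper
inclusions: on the two chains `[I1, I2, I3]` and `[I1, I2, I3']` (with `I1 = [0,2)`,
`I2 = [1,3)`, `I3 = [2,4)`, `I3' = [-1,1)`) the optimum is `2` in both cases, while every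
deterministic online algorithm with revocable acceptances obtains solutions of total
cardinality at most `3` over the two sequences. -/
theorem randomized_four_thirds_core :
    opt [i1, i2, i3] = 2 ∧ opt [i1, i2, i3'] = 2 ∧
      ∀ A : OnlineAlg, (A.run [i1, i2, i3]).card + (A.run [i1, i2, i3']).card ≤ 3 := by
  refine ⟨opt_eq_two i3 ne13.symm ne23.symm (Or.inl feas13),
    opt_eq_two i3' ne13'.symm ne23'.symm (Or.inr feas23'), ?_⟩
  intro A
  set S := A.run [i1, i2] with hS
  have hSsub : S ⊆ ({i1, i2} : Finset Ivl) := by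
    intro x hx
    have := A.mem_of_run [i1, i2] x hx
    simp only [List.mem_cons, List.not_mem_nil, or_false] at this
    simpa using this
  have hrev3 : A.run [i1, i2, i3] ⊆ insert i3 S := A.revocable [i1, i2] i3
  have hrev3' : A.run [i1, i2, i3'] ⊆ insert i3' S := A.revocable [i1, i2] i3'
  by_cases h2 : i2 ∈ S
  · -- then i1 ∉ S, S ⊆ {i2}
    have h1 : i1 ∉ S := by
      intro h1
      exact A.feasible_run [i1, i2] i1 h1 i2 h2 ne12 conf12
    have hSsub2 : S ⊆ ({i2} : Finset Ivl) := by
      intro x hx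
      have := hSsub hx
      simp only [Finset.mem_insert, Finset.mem_singleton] at this
      rcases this with rfl | rfl
      · exact absurd hx h1
      · simp
    have hsub3 : A.run [i1, i2, i3] ⊆ ({i3, i2} : Finset Ivl) := by
      intro x hx
      have := hrev3 hx
      rcases Finset.mem_insert.mp this with rfl | hxS
      · simp
      · have := hSsub2 hxS
        simp only [Finset.mem_singleton] at this
        simp [this]
    have hnot : ¬ (i3 ∈ A.run [i1, i2, i3] ∧ i2 ∈ A.run [i1, i2, i3]) := by
      rintro ⟨ha, hb⟩
      exact A.feasible_run [i1, i2, i3] i2 hb i3 ha ne23 conf23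
    have hb1 : (A.run [i1, i2, i3]).card ≤ 1 := card_le_one_of_subset_pair hsub3 hnot
    have hb2 : (A.run [i1, i2, i3']).card ≤ 2 := by
      apply card_le_two_of_subset_pair (a := i3') (b := i2)
      intro x hx
      have := hrev3' hx
      rcases Finset.mem_insert.mp this with rfl | hxS
      · simp
      · have := hSsub2 hxS
        simp only [Finset.mem_singleton] at this
        simp [this]
    omega
  · -- i2 ∉ S, S ⊆ {i1}
    have hSsub1 : S ⊆ ({i1} : Finset Ivl) := by
      intro x hx
      have := hSsub hx
      simp only [Finset.mem_insert, Finset.mem_singleton] at this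
      rcases this with rfl | rfl
      · simp
      · exact absurd hx h2
    have hsub3' : A.run [i1, i2, i3'] ⊆ ({i3', i1} : Finset Ivl) := by
      intro x hx
      have := hrev3' hx
      rcases Finset.mem_insert.mp this with rfl | hxS
      · simp
      · have := hSsub1 hxS
        simp only [Finset.mem_singleton] at this
        simp [this]
    have hnot : ¬ (i3' ∈ A.run [i1, i2, i3'] ∧ i1 ∈ A.run [i1, i2, i3']) := by
      rintro ⟨ha, hb⟩
      exact A.feasible_run [i1, i2, i3'] i1 hb i3' ha ne13' conf13'
    have hb2 : (A.run [i1, i2, i3']).card ≤ 1 := card_le_one_of_subset_pair hsub3' hnot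
    have hb1 : (A.run [i1, i2, i3]).card ≤ 2 := by
      apply card_le_two_of_subset_pair (a := i3) (b := i1)
      intro x hx
      have := hrev3 hx
      rcases Finset.mem_insert.mp this with rfl | hxS
      · simp
      · have := hSsub1 hxS
        simp only [Finset.mem_singleton] at this
        simp [this]
    omega
end
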